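/- Let η be a geodesic current and let μ be its corresponding frequency measure (i.e. η(Cyl[x,y]) = μ(Cyl(x⁻¹y)) for all x ≠ y in F). Suppose that for each a ∈ A there exist constants C_1(a), C_2(a) > 0 such that C_1(a)·μ(E) ≤ μ(a·E) ≤ C_2(a)·μ(E) for every Borel set E ⊆ ∂F ∖ Cyl(a⁻¹), and for a freely reduced word w = a_0⋯a_m set C_i(w) = C_i(a_0)⋯C_i(a_m) for i = 1, 2. If there is a constant M > 0 such that inf over w ∈ F of C_1(w⁻¹)/C_2(w) is at least 1/M and sup over w ∈ F of C_2(w) is at most M, then there exists a constant c > 0 and for every f ∈ F a constant b(f) > 0 such that for all disjoint Borel sets E, S ⊆ ∂F one has μ(f·E) ≥ b(f)·μ(E) and η((E × S) ∩ ∂²F) ≥ c·μ(E)·μ(S). -/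

import Mathlib

open MeasureTheory Filter Topology
open scoped ENNReal NNReal

namespace FGC

noncomputable section

variable (k : ℕ)

/-- The alphabet `A = Σ ∪ Σ⁻¹`: a letter is a basis element together with a sign. -/
abbrev L := Fin k × Bool

/-- The inverse of a letter. -/
def linv (a : L k) : L k := (a.1, !a.2)

/-- A right-infinite word is (freely) reduced if no letter is followed by its inverse. -/
def Red (x : ℕ → L k) : Prop := ∀ n, x (n + 1) ≠ linv k (x n)

/-- The boundary `∂F`: the set of infinite freely reduced words in the alphabet `A`. -/
def Boundary : Type := { x : ℕ → L k // Red k x }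

instance : TopologicalSpace (Boundary k) :=
  inferInstanceAs (TopologicalSpace { x : ℕ → L k // Red k x })

instance : MeasurableSpace (Boundary k) := borel _

instance : BorelSpace (Boundary k) := ⟨rfl⟩

/-- The free group of rank `k`. -/
abbrev F := FreeGroup (Fin k)

/-- The word length `|v|` of an element of `F`. -/
def wordLength (v : F k) : ℕ := v.toWord.length

/-- The cyclically reduced length `‖v‖`: the minimal word length among conjugates of `v`. -/
def cyclLength (v : F k) : ℕ := sInf { n | ∃ g : F k, wordLength k (g * v * g⁻¹) = n }

/-- The cylinder `Cyl v ⊆ ∂F` of rays starting with the reduced word of `v`. -/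
def Cyl (v : F k) : Set (Boundary k) :=
  { x | ∀ i : Fin v.toWord.length, x.1 i = v.toWord.get i }

/-- The shift deleting the first letter of a ray. -/
def shift (x : ℕ → L k) : ℕ → L k := fun n => x (n + 1)

/-- Prepending a letter to a ray. -/
def cons (a : L k) (x : ℕ → L k) : ℕ → L k
  | 0 => a
  | n + 1 => x n

/-- Prepending a (reversed) finite word to a ray, performing free reduction. -/
def prependAux : List (L k) → (ℕ → L k) → ℕ → L k
  | [], x => x
  | a :: r, x => prependAux r (if x 0 = linv k a then shift k x else cons k a x)

theorem red_shift {x : ℕ → L k} (hx : Red k x) : Red k (shift k x) :=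
  fun n => hx (n + 1)

theorem red_cons {a : L k} {x : ℕ → L k} (hx : Red k x) (h : x 0 ≠ linv k a) :
    Red k (cons k a x) := by
  intro n
  cases n with
  | zero => exact h
  | succ m => exact hx m

theorem red_prependAux : ∀ (r : List (L k)) {x : ℕ → L k}, Red k x → Red k (prependAux k r x)
  | [], _, hx => hx
  | a :: r, x, hx => by
    by_cases h : x 0 = linv k a
    · simp only [prependAux, if_pos h]
      exact red_prependAux r (red_shift k hx)
    · simp only [prependAux, if_neg h]
      exact red_prependAux r (red_cons k hx h)

/-- The left-translation action of `F` on `∂F`: concatenate and freely reduce. -/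
def act (g : F k) (x : Boundary k) : Boundary k :=
  ⟨prependAux k g.toWord.reverse x.1, red_prependAux k _ x.2⟩

/-- The shift map `T : ∂F → ∂F`. -/
def Tmap (x : Boundary k) : Boundary k := ⟨shift k x.1, red_shift k x.2⟩

/-- The double boundary `∂²F`, as the complement of the diagonal. -/
def D2 : Set (Boundary k × Boundary k) := { p | p.1 ≠ p.2 }

/-- The diagonal action of `F` on `∂F × ∂F`. -/
def actPair (g : F k) (p : Boundary k × Boundary k) : Boundary k × Boundary k :=
  (act k g p.1, act k g p.2)

/-- The cylinder `Cyl[1,w]` of geodesics through the segment from `1` to `w`. -/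
def baseCyl (w : F k) : Set (Boundary k × Boundary k) :=
  { p | p.1.1 0 ≠ p.2.1 0 ∧ p.2 ∈ Cyl k w }

/-- The base-ball `B = Cyl[1,1]` of geodesics through the base point. -/
def baseBall : Set (Boundary k × Boundary k) := baseCyl k 1

/-- The cylinder `Cyl[x,y] = x · Cyl[1, x⁻¹y]`. -/
def Cyl2 (x y : F k) : Set (Boundary k × Boundary k) :=
  actPair k x '' baseCyl k (x⁻¹ * y)

/-- A geodesic current: a Borel measure on `∂F × ∂F` giving no mass to the diagonal,
invariant under the diagonal `F`-action, and finite on compact subsets of `∂²F`. -/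
def IsCurrent (η : Measure (Boundary k × Boundary k)) : Prop :=
  η { p | p.1 = p.2 } = 0 ∧
  (∀ g : F k, ∀ W : Set (Boundary k × Boundary k), MeasurableSet W →
    η (actPair k g ⁻¹' W) = η W) ∧
  (∀ K : Set (Boundary k × Boundary k), K ⊆ D2 k → IsCompact K → η K < ⊤)

/-- The element of `F` given by the first `n` letters of a ray. -/
def prefixEl (x : Boundary k) (n : ℕ) : F k :=
  FreeGroup.mk (List.ofFn fun i : Fin n => x.1 i)

/-- `b : ∂F → ∂F` is the boundary extension of the automorphism `Φ`: for every ray `x`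
and every `m`, the length-`m` prefix of `b x` is the length-`m` prefix of the reduced
word of `Φ (x|_n)` for all sufficiently large `n`. -/
def IsBdryExt (Φ : F k ≃* F k) (b : Boundary k → Boundary k) : Prop :=
  ∀ x : Boundary k, ∀ m : ℕ, ∃ N : ℕ, ∀ n ≥ N,
    (Φ (prefixEl k x n)).toWord.take m = List.ofFn fun i : Fin m => (b x).1 i

/-- The map `∂Φ × ∂Φ` on pairs. -/
def pairMap (b : Boundary k → Boundary k) (p : Boundary k × Boundary k) :
    Boundary k × Boundary k := (b p.1, b p.2)

/-- The length of an automorphism with boundary map `b`, w.r.t. the current `η`: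
`L(Φ) = η((∂Φ × ∂Φ)⁻¹ B)`. -/
def autLen (η : Measure (Boundary k × Boundary k)) (b : Boundary k → Boundary k) : ℝ≥0∞ :=
  η (pairMap k b ⁻¹' baseBall k)

/-- The subgroup of inner automorphisms. -/
abbrev Inn : Subgroup (MulAut (F k)) := (MulAut.conj : F k →* MulAut (F k)).range

/-- `Out(F) = Aut(F)/Inn(F)` as a coset space. -/
abbrev OutQ := MulAut (F k) ⧸ Inn k

/-- A simple automorphism: induced by a permutation of the basis, or inner. -/
def SimpleAut (Φ : MulAut (F k)) : Prop :=
  (∃ σ : Equiv.Perm (Fin k), ∀ i, Φ (FreeGroup.of i) = FreeGroup.of (σ i)) ∨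
  (∃ v : F k, ∀ x, Φ x = v * x * v⁻¹)

/-- A Whitehead automorphism of the second kind. -/
def Whitehead2 (τ : MulAut (F k)) : Prop :=
  ∃ a : Fin k, ∀ i : Fin k,
    τ (FreeGroup.of i) = FreeGroup.of i ∨
    τ (FreeGroup.of i) = FreeGroup.of i * FreeGroup.of a ∨
    τ (FreeGroup.of i) = (FreeGroup.of a)⁻¹ * FreeGroup.of i ∨
    τ (FreeGroup.of i) = (FreeGroup.of a)⁻¹ * FreeGroup.of i * FreeGroup.of a

/-- The space of frequency measures: finite `T`-invariant Borel measures on `∂F`. -/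
def FreqM : Type :=
  { μ : Measure (Boundary k) //
    IsFiniteMeasure μ ∧ ∀ W : Set (Boundary k), MeasurableSet W → μ (Tmap k ⁻¹' W) = μ W }

/-- The space of geodesic currents. -/
def Currents : Type := { η : Measure (Boundary k × Boundary k) // IsCurrent k η }

/-- Continuous functions on `∂F × ∂F` with compact support contained in `∂²F`;
these are the test functions for the weak-* topology on currents. -/
def TestF : Type :=
  { φ : Boundary k × Boundary k → ℝ //
    Continuous φ ∧ IsCompact (tsupport φ) ∧ tsupport φ ⊆ D2 k }

/-- The weak-* topology on frequency measures. -/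
instance : TopologicalSpace (FreqM k) :=
  ⨅ φ : C(Boundary k, ℝ),
    TopologicalSpace.induced (fun μ : FreqM k => ∫ x, φ x ∂μ.1) inferInstance

/-- The weak-* topology on geodesic currents. -/
instance : TopologicalSpace (Currents k) :=
  ⨅ φ : TestF k,
    TopologicalSpace.induced (fun η : Currents k => ∫ p, φ.1 p ∂η.1) inferInstance

/-- Convergence of a sequence of group elements (as reduced words) to a boundary ray. -/
def WordTendsto (pn : ℕ → F k) (p : Boundary k) : Prop :=
  ∀ m : ℕ, ∃ N : ℕ, ∀ n ≥ N, (pn n).toWord.take m = List.ofFn fun i : Fin m => p.1 i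

/-- The length of the maximal common initial segment of two rays. -/
def commonLen (p : Boundary k × Boundary k) : ℕ :=
  sSup { m : ℕ | ∀ i < m, p.1.1 i = p.2.1 i }

/-- A single letter as an element of `F`. -/
def el (a : L k) : F k := FreeGroup.mk [a]

/-- The product of per-letter constants over the reduced word of `w`. -/
def Cprod (C : L k → ℝ≥0) (w : F k) : ℝ≥0 := (w.toWord.map C).prod

/-! ### Auxiliary development -/

section Auxiliary

variable {k : ℕ}

@[simp] lemma linv_linv (a : L k) : linv k (linv k a) = a := by
  simp [linv]

lemma prependAux_nil (x : ℕ → L k) : prependAux k [] x = x := rfl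

lemma prependAux_cons (a : L k) (r : List (L k)) (x : ℕ → L k) :
    prependAux k (a :: r) x
      = prependAux k r (if x 0 = linv k a then shift k x else cons k a x) := rfl

lemma prependAux_append (r₁ r₂ : List (L k)) (x : ℕ → L k) :
    prependAux k (r₁ ++ r₂) x = prependAux k r₂ (prependAux k r₁ x) := by
  induction r₁ generalizing x with
  | nil => rfl
  | cons a r ih =>
    rw [List.cons_append, prependAux_cons, prependAux_cons]
    exact ih _

/-- Action of a list of letters on the boundary (letters applied head first). -/
def bactL (l : List (L k)) (x : Boundary k) : Boundary k :=
  ⟨prependAux k l x.1, red_prependAux k l x.2⟩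

lemma bact_append (r₁ r₂ : List (L k)) (x : Boundary k) :
    bactL (r₁ ++ r₂) x = bactL r₂ (bactL r₁ x) :=
  Subtype.ext (prependAux_append r₁ r₂ x.1)

lemma bact_nil (x : Boundary k) : bactL ([] : List (L k)) x = x := rfl

lemma bact_nil_image (E : Set (Boundary k)) : bactL ([] : List (L k)) '' E = E := by
  have : bactL ([] : List (L k)) = id := funext bact_nil
  rw [this, Set.image_id]

lemma bact_single (a : L k) (x : Boundary k) :
    (bactL [a] x).1 = if x.1 0 = linv k a then shift k x.1 else cons k a x.1 := rfl

lemma bact_single_of_ne {a : L k} {x : Boundary k} (h : x.1 0 ≠ linv k a) :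
    (bactL [a] x).1 = cons k a x.1 := by rw [bact_single, if_neg h]

lemma bact_single_of_eq {a : L k} {x : Boundary k} (h : x.1 0 = linv k a) :
    (bactL [a] x).1 = shift k x.1 := by rw [bact_single, if_pos h]

lemma bact_pair (c : L k) (x : Boundary k) : bactL [linv k c] (bactL [c] x) = x := by
  apply Subtype.ext
  by_cases h : x.1 0 = linv k c
  · have h1 : (bactL [c] x).1 = shift k x.1 := bact_single_of_eq h
    have h2 : (bactL [c] x).1 0 ≠ linv k (linv k c) := by
      rw [h1, linv_linv]
      have := x.2 0
      rw [h] at this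
      simpa [shift] using this
    rw [bact_single_of_ne h2, h1]
    funext n
    cases n with
    | zero => exact h.symm
    | succ m => rfl
  · have h1 : (bactL [c] x).1 = cons k c x.1 := bact_single_of_ne h
    have h2 : (bactL [c] x).1 0 = linv k (linv k c) := by
      rw [h1, linv_linv]; rfl
    rw [bact_single_of_eq h2, h1]
    funext n
    rfl

lemma bact_pair' (c : L k) (x : Boundary k) : bactL [c, linv k c] x = x := by
  have : ([c, linv k c] : List (L k)) = [c] ++ [linv k c] := rfl
  rw [this, bact_append]
  exact bact_pair c x

lemma bact_step {l₁ l₂ : List (L k)} (h : FreeGroup.Red.Step l₁ l₂) (x : Boundary k) :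
    bactL l₁.reverse x = bactL l₂.reverse x := by
  cases h with
  | @not s t c b =>
    have e1 : (s ++ (c, b) :: (c, !b) :: t).reverse
        = t.reverse ++ ([(c, !b), (c, b)] ++ s.reverse) := by simp
    have e2 : (s ++ t).reverse = t.reverse ++ s.reverse := by simp
    rw [e1, e2, bact_append, bact_append, bact_append]
    congr 1
    have hc : ((c, b) : L k) = linv k (c, !b) := by simp [linv]
    rw [hc]
    exact bact_pair' _ _

lemma bact_red {l₁ l₂ : List (L k)} (h : FreeGroup.Red l₁ l₂) (x : Boundary k) :
    bactL l₁.reverse x = bactL l₂.reverse x := by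
  induction h with
  | refl => rfl
  | tail _ hstep ih => rw [ih, bact_step hstep]

lemma act_eq_bact (g : F k) (x : Boundary k) : act k g x = bactL g.toWord.reverse x := rfl

lemma act_mk (l : List (L k)) (x : Boundary k) :
    act k (FreeGroup.mk l) x = bactL l.reverse x := by
  rw [act_eq_bact, FreeGroup.toWord_mk]
  exact (bact_red FreeGroup.reduce.red x).symm

lemma act_mul (g h : F k) (x : Boundary k) : act k (g * h) x = act k g (act k h x) := by
  have hgh : g * h = FreeGroup.mk (g.toWord ++ h.toWord) := by
    rw [← FreeGroup.mul_mk, FreeGroup.mk_toWord, FreeGroup.mk_toWord]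
  rw [hgh, act_mk, List.reverse_append, bact_append]
  rfl

lemma act_one (x : Boundary k) : act k 1 x = x := by
  rw [act_eq_bact, FreeGroup.toWord_one]
  rfl

lemma act_inv_act (g : F k) (x : Boundary k) : act k g⁻¹ (act k g x) = x := by
  rw [← act_mul, inv_mul_cancel, act_one]

lemma act_act_inv (g : F k) (x : Boundary k) : act k g (act k g⁻¹ x) = x := by
  rw [← act_mul, mul_inv_cancel, act_one]

lemma act_image (g : F k) (E : Set (Boundary k)) : act k g '' E = act k g⁻¹ ⁻¹' E := by
  ext x
  constructor
  · rintro ⟨e, he, rfl⟩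
    simpa [Set.mem_preimage, act_inv_act] using he
  · intro h
    exact ⟨act k g⁻¹ x, h, act_act_inv g x⟩

lemma act_injective (g : F k) : Function.Injective (act k g) := by
  intro a b h
  have := congrArg (act k g⁻¹) h
  rwa [act_inv_act, act_inv_act] at this

lemma bact_eq_act (l : List (L k)) : bactL (k := k) l = act k (FreeGroup.mk l.reverse) := by
  funext x
  rw [act_mk, List.reverse_reverse]

lemma bact_injective (l : List (L k)) : Function.Injective (bactL (k := k) l) := by
  rw [bact_eq_act]
  exact act_injective _

lemma continuous_eval (i : ℕ) : Continuous (fun x : Boundary k => x.1 i) :=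
  (continuous_apply i).comp continuous_subtype_val

lemma continuous_bact_single (a : L k) : Continuous (bactL (k := k) [a]) := by
  apply Continuous.subtype_mk
  apply continuous_pi
  intro n
  have hrepr : (fun x : Boundary k => prependAux k [a] x.1 n)
      = fun x : Boundary k => if x.1 0 = linv k a then x.1 (n + 1) else cons k a x.1 n := by
    funext x
    have : prependAux k [a] x.1 = if x.1 0 = linv k a then shift k x.1 else cons k a x.1 := rfl
    rw [this]
    by_cases h : x.1 0 = linv k a <;> simp [h, shift]
  show Continuous fun x : Boundary k => prependAux k [a] x.1 n
  rw [hrepr]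
  cases n with
  | zero =>
    have : (fun x : Boundary k => if x.1 0 = linv k a then x.1 1 else cons k a x.1 0)
        = (fun p : L k × L k => if p.1 = linv k a then p.2 else a)
            ∘ fun x : Boundary k => (x.1 0, x.1 1) := rfl
    rw [this]
    exact continuous_of_discreteTopology.comp ((continuous_eval 0).prodMk (continuous_eval 1))
  | succ m =>
    have : (fun x : Boundary k => if x.1 0 = linv k a then x.1 (m + 2) else cons k a x.1 (m + 1))
        = (fun p : L k × L k × L k => if p.1 = linv k a then p.2.1 else p.2.2)
            ∘ fun x : Boundary k => (x.1 0, x.1 (m + 2), x.1 m) := rfl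
    rw [this]
    exact continuous_of_discreteTopology.comp
      ((continuous_eval 0).prodMk ((continuous_eval (m + 2)).prodMk (continuous_eval m)))

lemma continuous_bact (l : List (L k)) : Continuous (bactL (k := k) l) := by
  induction l with
  | nil =>
    have : bactL (k := k) [] = id := funext bact_nil
    rw [this]; exact continuous_id
  | cons a r ih =>
    have : bactL (k := k) (a :: r) = fun x => bactL r (bactL [a] x) :=
      funext fun x => bact_append [a] r x
    rw [this]
    exact ih.comp (continuous_bact_single a)

lemma continuous_act (g : F k) : Continuous (act k g) := by
  have : act k g = bactL g.toWord.reverse := funext fun x => act_eq_bact g x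
  rw [this]; exact continuous_bact _

lemma measurable_act (g : F k) : Measurable (act k g) := (continuous_act g).measurable

lemma measurableSet_act_image {g : F k} {E : Set (Boundary k)} (hE : MeasurableSet E) :
    MeasurableSet (act k g '' E) := by
  rw [act_image]; exact measurable_act _ hE

lemma measurableSet_bact_image (l : List (L k)) {E : Set (Boundary k)} (hE : MeasurableSet E) :
    MeasurableSet (bactL l '' E) := by
  rw [bact_eq_act]; exact measurableSet_act_image hE

/-- Cylinders indexed by raw lists. -/
def CylW (l : List (L k)) : Set (Boundary k) :=
  {x | ∀ (i : ℕ) (h : i < l.length), x.1 i = l[i]}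

lemma Cyl_eq_CylW (v : F k) : Cyl k v = CylW v.toWord := by
  ext x
  constructor
  · intro h i hi
    exact h ⟨i, hi⟩
  · intro h i
    exact h i i.2

lemma CylW_nil : CylW ([] : List (L k)) = Set.univ := by
  ext x; simp [CylW]

lemma mem_CylW_head {e : L k} {t : List (L k)} {x : Boundary k} (hx : x ∈ CylW (e :: t)) :
    x.1 0 = e := hx 0 (by simp)

lemma isOpen_CylW (l : List (L k)) : IsOpen (CylW l) := by
  have : CylW l = ⋂ i : Fin l.length, (fun x : Boundary k => x.1 i) ⁻¹' {l[(i : ℕ)]} := by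
    ext x
    simp only [CylW, Set.mem_iInter, Set.mem_preimage, Set.mem_singleton_iff, Set.mem_setOf_eq]
    exact ⟨fun h i => h i i.2, fun h i hi => h ⟨i, hi⟩⟩
  rw [this]
  exact isOpen_iInter_of_finite fun i => (isOpen_discrete _).preimage (continuous_eval _)

lemma isClosed_CylW (l : List (L k)) : IsClosed (CylW l) := by
  have : CylW l = ⋂ i : Fin l.length, (fun x : Boundary k => x.1 i) ⁻¹' {l[(i : ℕ)]} := by
    ext x
    simp only [CylW, Set.mem_iInter, Set.mem_preimage, Set.mem_singleton_iff, Set.mem_setOf_eq]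
    exact ⟨fun h i => h i i.2, fun h i hi => h ⟨i, hi⟩⟩
  rw [this]
  exact isClosed_iInter fun i => (isClosed_discrete _).preimage (continuous_eval _)

lemma measurableSet_CylW (l : List (L k)) : MeasurableSet (CylW l) :=
  (isOpen_CylW l).measurableSet

lemma measurableSet_ne0 (c : L k) : MeasurableSet {x : Boundary k | x.1 0 ≠ c} := by
  have : {x : Boundary k | x.1 0 ≠ c} = ((fun x : Boundary k => x.1 0) ⁻¹' {c})ᶜ := rfl
  rw [this]
  exact (((isOpen_discrete _).preimage (continuous_eval 0)).measurableSet).compl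

instance : CompactSpace (Boundary k) := by
  have hclosed : IsClosed {x : ℕ → L k | Red k x} := by
    have : {x : ℕ → L k | Red k x} = ⋂ n, {x : ℕ → L k | x (n + 1) ≠ linv k (x n)} := by
      ext x; simp [Red]
    rw [this]
    refine isClosed_iInter fun n => ?_
    have : {x : ℕ → L k | x (n + 1) ≠ linv k (x n)}
        = (fun x : ℕ → L k => (x (n + 1), x n)) ⁻¹' {p : L k × L k | p.1 = linv k p.2}ᶜ := rfl
    rw [this]
    exact (isClosed_discrete _).preimage
      ((continuous_apply (n + 1)).prodMk (continuous_apply n))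
  exact isCompact_iff_compactSpace.mp hclosed.isCompact

instance : SecondCountableTopology (Boundary k) :=
  inferInstanceAs (SecondCountableTopology ({x | Red k x} : Set (ℕ → L k)))

instance : TopologicalSpace.PseudoMetrizableSpace (Boundary k) :=
  inferInstanceAs (TopologicalSpace.PseudoMetrizableSpace ({x | Red k x} : Set (ℕ → L k)))

example : TopologicalSpace.PseudoMetrizableSpace (Boundary k × Boundary k) := inferInstance
example : BorelSpace (Boundary k × Boundary k) := inferInstance
example : Countable (List (L k) × L k × L k) := inferInstance

/-- Freely reduced words. -/
def RedW (l : List (L k)) : Prop := List.Chain' (fun a b => b ≠ linv k a) l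

lemma RedW.tail' {a : L k} {t : List (L k)} (h : RedW (a :: t)) : RedW t :=
  List.IsChain.tail h

lemma reduce_eq_self {l : List (L k)} (h : RedW l) : FreeGroup.reduce l = l := by
  induction l with
  | nil => rfl
  | cons a t ih =>
    rw [FreeGroup.reduce.cons, ih h.tail']
    cases t with
    | nil => rfl
    | cons b t' =>
      have hab : b ≠ linv k a := (List.isChain_cons_cons.mp h).1
      have hcond : ¬(a.1 = b.1 ∧ a.2 = !b.2) := by
        rintro ⟨h1, h2⟩
        apply hab
        have : b.2 = !a.2 := by rw [h2, Bool.not_not]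
        exact Prod.ext h1.symm this
      show (if a.1 = b.1 ∧ a.2 = !b.2 then t' else a :: b :: t') = a :: b :: t'
      rw [if_neg hcond]

lemma toWord_mk_self {l : List (L k)} (h : RedW l) : (FreeGroup.mk l).toWord = l := by
  rw [FreeGroup.toWord_mk, reduce_eq_self h]

lemma invRev_eq (l : List (L k)) : FreeGroup.invRev l = (l.map (linv k)).reverse := rfl

lemma redW_invRev {l : List (L k)} (h : RedW l) : RedW (FreeGroup.invRev l) := by
  rw [invRev_eq, RedW, List.Chain', List.isChain_reverse, List.isChain_map]
  refine h.imp fun a b hab => ?_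
  intro hc
  rw [linv_linv] at hc
  exact hab hc.symm

lemma redW_of_mem_CylW {l : List (L k)} {x : Boundary k} (hx : x ∈ CylW l) : RedW l := by
  rw [RedW, List.Chain', List.isChain_iff_getElem]
  intro i hlt
  have h1 : i < l.length := by omega
  have h2 : i + 1 < l.length := by omega
  have e1 : l[i] = x.1 i := (hx i h1).symm
  have e2 : l[i + 1] = x.1 (i + 1) := (hx (i + 1) h2).symm
  rw [e1, e2]
  exact x.2 i

lemma mem_CylW_ofFn (x : Boundary k) (n : ℕ) :
    x ∈ CylW (List.ofFn fun i : Fin n => x.1 i) := by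
  intro i hi
  have hi' : i < n := by simpa using hi
  simp [List.getElem_ofFn]

/-- Image of a compatible set under the action of a reduced word is inside the cylinder. -/
lemma bact_image_subset_CylW :
    ∀ l : List (L k), RedW l → ∀ E : Set (Boundary k),
      (∀ c ∈ l.getLast?, E ⊆ {x : Boundary k | x.1 0 ≠ linv k c}) →
      bactL l.reverse '' E ⊆ CylW l := by
  intro l
  induction l with
  | nil => intro _ E _; simp [CylW_nil]
  | cons a t ih =>
    intro hred E hlast
    have hlast' : ∀ c ∈ t.getLast?, E ⊆ {x : Boundary k | x.1 0 ≠ linv k c} := by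
      intro c hc
      apply hlast
      cases t with
      | nil => simp at hc
      | cons b t' => rwa [List.getLast?_cons_cons]
    have hsubim : bactL t.reverse '' E ⊆ CylW t := ih hred.tail' E hlast'
    have hsub' : bactL t.reverse '' E ⊆ {x : Boundary k | x.1 0 ≠ linv k a} := by
      cases t with
      | nil =>
        rw [List.reverse_nil, bact_nil_image]
        exact hlast a (by simp)
      | cons b t' =>
        intro x hx
        have h0 : x.1 0 = b := mem_CylW_head (hsubim hx)
        have hba : b ≠ linv k a := (List.isChain_cons_cons.mp hred).1
        simpa [h0] using hba
    have himg : bactL (a :: t).reverse '' E = bactL [a] '' (bactL t.reverse '' E) := by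
      have hfun : bactL (k := k) (t.reverse ++ [a]) = fun x => bactL [a] (bactL t.reverse x) :=
        funext fun x => bact_append _ _ x
      rw [List.reverse_cons, hfun, ← Set.image_comp]
      rfl
    rw [himg]
    rintro _ ⟨y, hy, rfl⟩
    have hy0 : y.1 0 ≠ linv k a := hsub' hy
    have hcons : (bactL [a] y).1 = cons k a y.1 := bact_single_of_ne hy0
    intro i hi
    cases i with
    | zero => rw [hcons]; rfl
    | succ j =>
      have hj : j < t.length := by simpa using hi
      have := (hsubim hy) j hj
      rw [hcons]
      show y.1 j = (a :: t)[j + 1]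
      simpa using this

lemma CylW_subset_image :
    ∀ l : List (L k), RedW l →
      CylW l ⊆ bactL l.reverse '' {x : Boundary k | ∀ c ∈ l.getLast?, x.1 0 ≠ linv k c} := by
  intro l
  induction l with
  | nil => intro _ x _; exact ⟨x, by simp, bact_nil x⟩
  | cons a t ih =>
    intro hred x hx
    have hx0 : x.1 0 = a := mem_CylW_head hx
    have hxt : Tmap k x ∈ CylW t := by
      intro i hi
      show x.1 (i + 1) = t[i]
      have := hx (i + 1) (by simpa using Nat.succ_lt_succ hi)
      simpa using this
    obtain ⟨e, he, hee⟩ := ih hred.tail' hxt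
    have hxa : x.1 1 ≠ linv k a := by rw [← hx0]; exact x.2 0
    refine ⟨e, ?_, ?_⟩
    · intro c hc
      cases t with
      | nil =>
        simp only [List.getLast?_singleton, Option.mem_def, Option.some.injEq] at hc
        subst hc
        have he' : e = Tmap k x := by rw [← hee]; rfl
        rw [he']
        exact hxa
      | cons b t' => exact he c (by rwa [List.getLast?_cons_cons] at hc)
    · rw [List.reverse_cons, bact_append, hee]
      apply Subtype.ext
      have h0 : (Tmap k x).1 0 ≠ linv k a := hxa
      rw [bact_single_of_ne h0]
      funext n
      cases n with
      | zero => exact hx0.symm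
      | succ m => rfl

lemma CylW_eq_image {l : List (L k)} (h : RedW l) :
    CylW l = bactL l.reverse '' {x : Boundary k | ∀ c ∈ l.getLast?, x.1 0 ≠ linv k c} := by
  refine subset_antisymm (CylW_subset_image l h) (bact_image_subset_CylW l h _ ?_)
  intro c hc x hx
  exact hx c hc

lemma CylW_append {r s : List (L k)} (h : RedW (r ++ s)) (hs : s ≠ []) :
    CylW (r ++ s) = bactL r.reverse '' CylW s := by
  have hsr : RedW s := (List.isChain_append.mp h).2.1
  have hgl : (r ++ s).getLast? = s.getLast? := by
    rw [List.getLast?_append]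
    rw [List.getLast?_eq_getLast hs]
    rfl
  rw [CylW_eq_image h, hgl, List.reverse_append]
  have hfun : bactL (k := k) (s.reverse ++ r.reverse)
      = bactL r.reverse ∘ bactL s.reverse := funext fun x => bact_append _ _ x
  rw [hfun, Set.image_comp, ← CylW_eq_image hsr]

/-- Master measure-bound lemma: applying a reduced word without cancellation
multiplies measures by at most the product of the per-letter constants. -/
lemma bact_master (μ : Measure (Boundary k)) (C1 C2 : L k → ℝ≥0)
    (hb : ∀ a : L k, ∀ E : Set (Boundary k), MeasurableSet E →
      E ⊆ {x : Boundary k | x.1 0 ≠ linv k a} →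
      (C1 a : ℝ≥0∞) * μ E ≤ μ (bactL [a] '' E) ∧
        μ (bactL [a] '' E) ≤ (C2 a : ℝ≥0∞) * μ E) :
    ∀ l : List (L k), RedW l → ∀ E : Set (Boundary k), MeasurableSet E →
      (∀ c ∈ l.getLast?, E ⊆ {x : Boundary k | x.1 0 ≠ linv k c}) →
      ((l.map C1).prod : ℝ≥0∞) * μ E ≤ μ (bactL l.reverse '' E) ∧
        μ (bactL l.reverse '' E) ≤ ((l.map C2).prod : ℝ≥0∞) * μ E := by
  intro l
  induction l with
  | nil =>
    intro _ E _ _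
    rw [List.reverse_nil, bact_nil_image]
    simp
  | cons a t ih =>
    intro hred E hE hlast
    have hlast' : ∀ c ∈ t.getLast?, E ⊆ {x : Boundary k | x.1 0 ≠ linv k c} := by
      intro c hc
      apply hlast
      cases t with
      | nil => simp at hc
      | cons b t' => rwa [List.getLast?_cons_cons]
    obtain ⟨hlow, hupp⟩ := ih hred.tail' E hE hlast'
    set E' := bactL t.reverse '' E with hE'def
    have hE' : MeasurableSet E' := measurableSet_bact_image _ hE
    have hsub' : E' ⊆ {x : Boundary k | x.1 0 ≠ linv k a} := by
      cases t with
      | nil =>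
        rw [hE'def, List.reverse_nil, bact_nil_image]
        exact hlast a (by simp)
      | cons b t' =>
        intro x hx
        have h0 : x.1 0 = b :=
          mem_CylW_head (bact_image_subset_CylW _ hred.tail' E hlast' hx)
        have hba : b ≠ linv k a := (List.isChain_cons_cons.mp hred).1
        simpa [h0] using hba
    obtain ⟨h1, h2⟩ := hb a E' hE' hsub'
    have himg : bactL (a :: t).reverse '' E = bactL [a] '' E' := by
      have hfun : bactL (k := k) (t.reverse ++ [a]) = bactL [a] ∘ bactL t.reverse :=
        funext fun x => bact_append _ _ x
      rw [List.reverse_cons, hfun, Set.image_comp]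
    rw [himg, List.map_cons, List.prod_cons, ENNReal.coe_mul]
    constructor
    · calc (C1 a : ℝ≥0∞) * ((t.map C1).prod : ℝ≥0∞) * μ E
          = (C1 a : ℝ≥0∞) * (((t.map C1).prod : ℝ≥0∞) * μ E) := by ring
        _ ≤ (C1 a : ℝ≥0∞) * μ E' := mul_le_mul_right hlow _
        _ ≤ μ (bactL [a] '' E') := h1
    · calc μ (bactL [a] '' E') ≤ (C2 a : ℝ≥0∞) * μ E' := h2
        _ ≤ (C2 a : ℝ≥0∞) * (((t.map C2).prod : ℝ≥0∞) * μ E) := mul_le_mul_right hupp _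
        _ = (C2 a : ℝ≥0∞) * ((t.map C2).prod : ℝ≥0∞) * μ E := by ring

lemma actPair_image_prod (g : F k) (A B : Set (Boundary k)) :
    actPair k g '' (A ×ˢ B) = (act k g '' A) ×ˢ (act k g '' B) := by
  ext p
  constructor
  · rintro ⟨⟨q1, q2⟩, ⟨hq1, hq2⟩, rfl⟩
    exact ⟨⟨q1, hq1, rfl⟩, ⟨q2, hq2, rfl⟩⟩
  · rintro ⟨⟨q1, hq1, h1⟩, ⟨q2, hq2, h2⟩⟩
    exact ⟨(q1, q2), ⟨hq1, hq2⟩, by simp [actPair, h1, h2]⟩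

lemma prod_ne_zero_nnreal {C : L k → ℝ≥0} (hC : ∀ a, 0 < C a) (l : List (L k)) :
    0 < (l.map C).prod := by
  induction l with
  | nil => simp
  | cons a t ih =>
    rw [List.map_cons, List.prod_cons]
    exact mul_pos (hC a) ih

/-- Neighborhood basis of prefix cylinders. -/
lemma exists_cylW_subset {U : Set (Boundary k)} (hU : IsOpen U) {p : Boundary k}
    (hp : p ∈ U) :
    ∃ n0 : ℕ, ∀ n ≥ n0, CylW (List.ofFn fun i : Fin n => p.1 i) ⊆ U := by
  obtain ⟨U', hU', hUeq⟩ := isOpen_induced_iff.mp hU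
  have hp' : p.1 ∈ U' := by rw [← hUeq] at hp; exact hp
  obtain ⟨I, u, hIu, hIsub⟩ := isOpen_pi_iff.mp hU' p.1 hp'
  refine ⟨I.sup id + 1, fun n hn q hq => ?_⟩
  have : q.1 ∈ U' := by
    apply hIsub
    intro i hi
    have hilt : i < n := by
      have : i ≤ I.sup id := Finset.le_sup (f := id) hi
      omega
    have : q.1 i = p.1 i := by
      have := hq i (by simpa using hilt)
      simpa using this
    rw [this]
    exact (hIu i hi).2
  rw [← hUeq]
  exact this

/-- Distinct cylinders of the same level are disjoint. -/
lemma cylW_ofFn_disjoint {n : ℕ} {f g : Fin n → L k} (h : f ≠ g) :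
    Disjoint (CylW (List.ofFn f)) (CylW (List.ofFn g)) := by
  rw [Set.disjoint_left]
  intro x hxf hxg
  apply h
  funext i
  have h1 := hxf i (by simpa using i.2)
  have h2 := hxg i (by simpa using i.2)
  simp only [List.getElem_ofFn] at h1 h2
  rw [← h1, ← h2]

lemma cylW_ofFn_succ_subset {n : ℕ} {f : Fin n → L k} {x : Boundary k}
    (hx : x ∈ CylW (List.ofFn f)) :
    CylW (List.ofFn fun i : Fin (n + 1) => x.1 i) ⊆ CylW (List.ofFn f) := by
  intro y hy i hi
  have hin : i < n := by simpa using hi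
  have h1 := hy i (by simp; omega)
  have h2 := hx i hi
  simp only [List.getElem_ofFn] at h1 ⊢
  rw [h1]
  have := hx i hi
  simpa using this

end Auxiliary

theorem criterion_for_length_compactness (k : ℕ) (hk : 2 ≤ k)
    (η : Measure (Boundary k × Boundary k)) (hη : IsCurrent k η)
    (μ : Measure (Boundary k)) [IsFiniteMeasure μ]
    (hT : ∀ W : Set (Boundary k), MeasurableSet W → μ (Tmap k ⁻¹' W) = μ W)
    (hcorr : ∀ x y : F k, x ≠ y → η (Cyl2 k x y) = μ (Cyl k (x⁻¹ * y)))
    (C1 C2 : L k → ℝ≥0) (hC1 : ∀ a, 0 < C1 a) (hC2 : ∀ a, 0 < C2 a)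
    (hbound : ∀ a : L k, ∀ E : Set (Boundary k), MeasurableSet E →
      E ⊆ (Cyl k (el k (linv k a)))ᶜ →
      (C1 a : ℝ≥0∞) * μ E ≤ μ (act k (el k a) '' E) ∧
        μ (act k (el k a) '' E) ≤ (C2 a : ℝ≥0∞) * μ E)
    (M : ℝ≥0) (hM1 : ∀ w : F k, 1 / M ≤ Cprod k C1 w⁻¹ / Cprod k C2 w)
    (hM2 : ∀ w : F k, Cprod k C2 w ≤ M) :
    ∃ c : ℝ≥0∞, 0 < c ∧ ∀ f : F k, ∃ b : ℝ≥0∞, 0 < b ∧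
      ∀ E S : Set (Boundary k), MeasurableSet E → MeasurableSet S → Disjoint E S →
        b * μ E ≤ μ (act k f '' E) ∧ c * (μ E * μ S) ≤ η ((E ×ˢ S) ∩ D2 k) := by
  classical
  -- Basic facts about `M`.
  have hM1le : (1 : ℝ≥0) ≤ M := by
    have := hM2 1
    simpa [Cprod, FreeGroup.toWord_one] using this
  have hM0 : M ≠ 0 := by
    intro h; rw [h] at hM1le; exact absurd hM1le (by norm_num)
  have hMtop : (M : ℝ≥0∞) ≠ ⊤ := ENNReal.coe_ne_top
  have hMne : (M : ℝ≥0∞) ≠ 0 := by exact_mod_cast hM0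
  -- The single-letter bound, reformulated.
  have hb : ∀ a : L k, ∀ E : Set (Boundary k), MeasurableSet E →
      E ⊆ {x : Boundary k | x.1 0 ≠ linv k a} →
      (C1 a : ℝ≥0∞) * μ E ≤ μ (bactL [a] '' E) ∧
        μ (bactL [a] '' E) ≤ (C2 a : ℝ≥0∞) * μ E := by
    intro a E hE hsub
    have h1 : act k (el k a) = bactL [a] := by
      funext x
      rw [el, act_mk, List.reverse_singleton]
    have h2 : (Cyl k (el k (linv k a)))ᶜ = {x : Boundary k | x.1 0 ≠ linv k a} := by
      rw [Cyl_eq_CylW, el,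
        show (FreeGroup.mk [linv k a]).toWord = [linv k a] from toWord_mk_self (List.isChain_singleton _)]
      ext x
      constructor
      · intro hx he
        exact hx fun i hi => by
          obtain rfl : i = 0 := by simpa using hi
          exact he
      · intro hx hmem
        exact hx (hmem 0 (by norm_num))
    have := hbound a E hE (by rw [h2]; exact hsub)
    rwa [h1] at this
  -- Products of `C2` over reduced words are bounded by `M`.
  have hprodC2_le : ∀ l : List (L k), RedW l → ((l.map C2).prod : ℝ≥0) ≤ M := by
    intro l hl
    have := hM2 (FreeGroup.mk l)
    simpa [Cprod, toWord_mk_self hl] using this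
  -- `C2`-products are controlled by `C1`-products of the inverse word.
  have hM1' : ∀ l : List (L k), RedW l →
      ((l.map C2).prod : ℝ≥0) ≤ M * ((FreeGroup.invRev l).map C1).prod := by
    intro l hl
    have h := hM1 (FreeGroup.mk l)
    have e1 : Cprod k C1 (FreeGroup.mk l)⁻¹ = ((FreeGroup.invRev l).map C1).prod := by
      rw [Cprod, FreeGroup.toWord_inv, toWord_mk_self hl]
    have e2 : Cprod k C2 (FreeGroup.mk l) = (l.map C2).prod := by
      rw [Cprod, toWord_mk_self hl]
    rw [e1, e2] at h
    set P1 := ((FreeGroup.invRev l).map C1).prod with hP1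
    set P2 := (l.map C2).prod with hP2
    have hP2ne : P2 ≠ 0 := (prod_ne_zero_nnreal hC2 l).ne'
    have := mul_le_mul_right h P2
    rw [mul_one_div, mul_comm P2 (P1 / P2), div_mul_cancel₀ _ hP2ne] at this
    rwa [div_le_iff₀ (by positivity), mul_comm P1 M] at this
  -- The global constant.
  set A : ℝ≥0∞ := (M : ℝ≥0∞) ^ 3 * μ Set.univ with hA
  have hAtop : A ≠ ⊤ := ENNReal.mul_ne_top (ENNReal.pow_ne_top hMtop) (measure_ne_top μ _)
  set c : ℝ≥0∞ := (A + 1)⁻¹ with hc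
  have hcpos : 0 < c := ENNReal.inv_pos.mpr (ENNReal.add_ne_top.mpr ⟨hAtop, ENNReal.one_ne_top⟩)
  have hcA : c * A ≤ 1 := by
    calc c * A ≤ c * (A + 1) := mul_le_mul_right le_self_add _
      _ = 1 := ENNReal.inv_mul_cancel (by simp) (ENNReal.add_ne_top.mpr ⟨hAtop, ENNReal.one_ne_top⟩)
  -- Part 1: lower bound for a single letter.
  have hb1 : ∀ a : L k, ∀ E : Set (Boundary k), MeasurableSet E →
      ((min (C1 a) M⁻¹ : ℝ≥0) : ℝ≥0∞) * μ E ≤ μ (bactL [a] '' E) := by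
    intro a E hE
    set Ω : Set (Boundary k) := {x : Boundary k | x.1 0 ≠ linv k a} with hΩ
    have hΩm : MeasurableSet Ω := measurableSet_ne0 _
    set E1 := E ∩ Ω with hE1
    set E2 := E ∩ Ωᶜ with hE2
    have hE1m : MeasurableSet E1 := hE.inter hΩm
    have hE2m : MeasurableSet E2 := hE.inter hΩm.compl
    have hdisjE : Disjoint E1 E2 := Set.disjoint_left.mpr fun x hx1 hx2 => hx2.2 hx1.2
    have hunion : E1 ∪ E2 = E := by
      rw [hE1, hE2, ← Set.inter_union_distrib_left, Set.union_compl_self, Set.inter_univ]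
    have h1 := (hb a E1 hE1m fun x hx => hx.2).1
    have hY : bactL [a] '' E2 ⊆ {x : Boundary k | x.1 0 ≠ linv k (linv k a)} := by
      rintro _ ⟨x, hx, rfl⟩
      have hx0 : x.1 0 = linv k a := by
        have := hx.2
        simpa [hΩ] using this
      show (bactL [a] x).1 0 ≠ linv k (linv k a)
      rw [bact_single_of_eq hx0, linv_linv]
      have := x.2 0
      rw [hx0] at this
      simpa [shift] using this
    have hYm : MeasurableSet (bactL [a] '' E2) := measurableSet_bact_image _ hE2m
    have h2 := (hb (linv k a) _ hYm hY).2
    have himg2 : bactL [linv k a] '' (bactL [a] '' E2) = E2 := by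
      rw [← Set.image_comp]
      have : bactL (k := k) [linv k a] ∘ bactL [a] = id := funext fun x => bact_pair a x
      rw [this, Set.image_id]
    rw [himg2] at h2
    have hC2M : (C2 (linv k a) : ℝ≥0∞) ≤ (M : ℝ≥0∞) := by
      exact_mod_cast (by simpa using hprodC2_le [linv k a] (List.isChain_singleton _) :
        C2 (linv k a) ≤ M)
    have h2' : (M : ℝ≥0∞)⁻¹ * μ E2 ≤ μ (bactL [a] '' E2) := by
      have hle : μ E2 ≤ (M : ℝ≥0∞) * μ (bactL [a] '' E2) :=
        h2.trans (mul_le_mul_left hC2M _)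
      calc (M : ℝ≥0∞)⁻¹ * μ E2
          ≤ (M : ℝ≥0∞)⁻¹ * ((M : ℝ≥0∞) * μ (bactL [a] '' E2)) := mul_le_mul_right hle _
        _ = μ (bactL [a] '' E2) := by
            rw [← mul_assoc, ENNReal.inv_mul_cancel hMne hMtop, one_mul]
    have himgu : bactL [a] '' E = bactL [a] '' E1 ∪ bactL [a] '' E2 := by
      rw [← Set.image_union, hunion]
    have hdimg : Disjoint (bactL [a] '' E1) (bactL [a] '' E2) :=
      Set.disjoint_image_of_injective (bact_injective _) hdisjE
    have hEeq : μ E = μ E1 + μ E2 := by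
      rw [← hunion]; exact measure_union hdisjE hE2m
    have hIeq : μ (bactL [a] '' E) = μ (bactL [a] '' E1) + μ (bactL [a] '' E2) := by
      rw [himgu]; exact measure_union hdimg hYm
    have hm1 : ((min (C1 a) M⁻¹ : ℝ≥0) : ℝ≥0∞) ≤ (C1 a : ℝ≥0∞) := by
      exact_mod_cast min_le_left _ _
    have hm2 : ((min (C1 a) M⁻¹ : ℝ≥0) : ℝ≥0∞) ≤ (M : ℝ≥0∞)⁻¹ := by
      rw [← ENNReal.coe_inv hM0]
      exact_mod_cast min_le_right _ _
    calc ((min (C1 a) M⁻¹ : ℝ≥0) : ℝ≥0∞) * μ E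
        = ((min (C1 a) M⁻¹ : ℝ≥0) : ℝ≥0∞) * μ E1
          + ((min (C1 a) M⁻¹ : ℝ≥0) : ℝ≥0∞) * μ E2 := by rw [hEeq, mul_add]
      _ ≤ (C1 a : ℝ≥0∞) * μ E1 + (M : ℝ≥0∞)⁻¹ * μ E2 :=
          add_le_add (mul_le_mul_left hm1 _) (mul_le_mul_left hm2 _)
      _ ≤ μ (bactL [a] '' E1) + μ (bactL [a] '' E2) := add_le_add h1 h2'
      _ = μ (bactL [a] '' E) := hIeq.symm
  -- Part 1: lower bound for any word, by induction.
  have hbl : ∀ lw : List (L k), ∃ b : ℝ≥0∞, 0 < b ∧ ∀ E : Set (Boundary k), MeasurableSet E →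
      b * μ E ≤ μ (bactL lw.reverse '' E) := by
    intro lw
    induction lw with
    | nil =>
      exact ⟨1, one_pos, fun E hE => by rw [List.reverse_nil, bact_nil_image, one_mul]⟩
    | cons a t ih =>
      obtain ⟨b, hbpos, hbE⟩ := ih
      have hmpos : (0 : ℝ≥0) < min (C1 a) M⁻¹ := lt_min (hC1 a) (by positivity)
      refine ⟨((min (C1 a) M⁻¹ : ℝ≥0) : ℝ≥0∞) * b, ?_, ?_⟩
      · exact ENNReal.mul_pos (by exact_mod_cast hmpos.ne') hbpos.ne'
      · intro E hE
        have himg : bactL (a :: t).reverse '' E = bactL [a] '' (bactL t.reverse '' E) := by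
          have hfun : bactL (k := k) (t.reverse ++ [a]) = bactL [a] ∘ bactL t.reverse :=
            funext fun x => bact_append _ _ x
          rw [List.reverse_cons, hfun, Set.image_comp]
        rw [himg, mul_assoc]
        calc ((min (C1 a) M⁻¹ : ℝ≥0) : ℝ≥0∞) * (b * μ E)
            ≤ ((min (C1 a) M⁻¹ : ℝ≥0) : ℝ≥0∞) * μ (bactL t.reverse '' E) :=
              mul_le_mul_right (hbE E hE) _
          _ ≤ μ (bactL [a] '' (bactL t.reverse '' E)) :=
              hb1 a _ (measurableSet_bact_image _ hE)
  -- Core bound for a pair of cylinders branching at the end of `l`.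
  have core : ∀ (l u' w' : List (L k)) (a b : L k), a ≠ b →
      RedW (l ++ a :: u') → RedW (l ++ b :: w') →
      μ (CylW (l ++ a :: u')) * μ (CylW (l ++ b :: w'))
        ≤ A * η ((CylW (l ++ a :: u')) ×ˢ (CylW (l ++ b :: w'))) := by
    intro l u' w' a b hab hu hw
    have hl : RedW l := (List.isChain_append.mp hu).1
    have hau : RedW (a :: u') := (List.isChain_append.mp hu).2.1
    have hbw : RedW (b :: w') := (List.isChain_append.mp hw).2.1
    have hcu? : (a :: u').getLast? = some ((a :: u').getLast (List.cons_ne_nil a u')) :=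
      List.getLast?_eq_getLast _
    have hulast : (l ++ a :: u').getLast? = some ((a :: u').getLast (List.cons_ne_nil a u')) := by
      rw [List.getLast?_append, hcu?]; rfl
    -- The reduced word of (mk u)⁻¹ * mk w.
    have hdecomp : (a :: u') = (a :: u').dropLast ++ [(a :: u').getLast (List.cons_ne_nil a u')] :=
      (List.dropLast_append_getLast _).symm
    have hrt : FreeGroup.invRev (a :: u')
        = linv k ((a :: u').getLast (List.cons_ne_nil a u'))
          :: ((a :: u').dropLast.map (linv k)).reverse := by
      rw [invRev_eq]
      conv_lhs => rw [hdecomp]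
      rw [List.map_append, List.reverse_append]
      simp
    have hrlast : (FreeGroup.invRev (a :: u')).getLast? = some (linv k a) := by
      rw [invRev_eq, List.getLast?_reverse, List.head?_map]
      rfl
    have hrred : RedW (FreeGroup.invRev (a :: u')) := redW_invRev hau
    have hrz : RedW (FreeGroup.invRev (a :: u') ++ b :: w') := by
      refine List.isChain_append.mpr ⟨hrred, hbw, ?_⟩
      intro x1 hx1 y1 hy1
      rw [hrlast, Option.mem_def, Option.some.injEq] at hx1
      simp only [List.head?_cons, Option.mem_def, Option.some.injEq] at hy1
      subst hx1; subst hy1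
      rw [linv_linv]
      exact hab.symm
    have hznil : (FreeGroup.invRev (a :: u') ++ b :: w') ≠ [] := by
      rw [hrt]; simp
    have hzhead : (FreeGroup.invRev (a :: u') ++ b :: w')
        = linv k ((a :: u').getLast (List.cons_ne_nil a u'))
          :: (((a :: u').dropLast.map (linv k)).reverse ++ b :: w') := by
      rw [hrt]; rfl
    -- The two group elements are distinct.
    have hXY : FreeGroup.mk (l ++ a :: u') ≠ FreeGroup.mk (l ++ b :: w') := by
      intro heq
      have heqw := congrArg FreeGroup.toWord heq
      rw [toWord_mk_self hu, toWord_mk_self hw] at heqw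
      have h1 : (l ++ a :: u')[l.length]? = some a := by
        rw [List.getElem?_append_right (le_refl _), Nat.sub_self]; simp
      have h2 : (l ++ b :: w')[l.length]? = some b := by
        rw [List.getElem?_append_right (le_refl _), Nat.sub_self]; simp
      rw [heqw, h2] at h1
      exact hab (Eq.symm (show b = a by simpa using h1))
    have hinv : (FreeGroup.mk (l ++ a :: u'))⁻¹ * FreeGroup.mk (l ++ b :: w')
        = FreeGroup.mk (FreeGroup.invRev (a :: u') ++ b :: w') := by
      have e1 : FreeGroup.mk (l ++ a :: u') = FreeGroup.mk l * FreeGroup.mk (a :: u') :=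
        (FreeGroup.mul_mk).symm
      have e2 : FreeGroup.mk (l ++ b :: w') = FreeGroup.mk l * FreeGroup.mk (b :: w') :=
        (FreeGroup.mul_mk).symm
      rw [e1, e2, mul_inv_rev, mul_assoc, inv_mul_cancel_left, FreeGroup.inv_mk,
        FreeGroup.mul_mk]
    -- The cylinder rectangle is a `Cyl2`.
    have hcyl2 : Cyl2 k (FreeGroup.mk (l ++ a :: u')) (FreeGroup.mk (l ++ b :: w'))
        = CylW (l ++ a :: u') ×ˢ CylW (l ++ b :: w') := by
      rw [Cyl2, hinv]
      have hbase : baseCyl k (FreeGroup.mk (FreeGroup.invRev (a :: u') ++ b :: w'))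
          = {p : Boundary k |
              p.1 0 ≠ linv k ((a :: u').getLast (List.cons_ne_nil a u'))} ×ˢ
            CylW (FreeGroup.invRev (a :: u') ++ b :: w') := by
        ext p
        simp only [baseCyl, Set.mem_setOf_eq, Set.mem_prod, Cyl_eq_CylW, toWord_mk_self hrz]
        constructor
        · rintro ⟨hne, hcz⟩
          have h20 : p.2.1 0 = linv k ((a :: u').getLast (List.cons_ne_nil a u')) :=
            mem_CylW_head (by rw [← hzhead]; exact hcz)
          exact ⟨by rw [← h20]; exact hne, hcz⟩
        · rintro ⟨hne, hcz⟩
          have h20 : p.2.1 0 = linv k ((a :: u').getLast (List.cons_ne_nil a u')) :=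
            mem_CylW_head (by rw [← hzhead]; exact hcz)
          exact ⟨by rw [h20]; exact hne, hcz⟩
      rw [hbase, actPair_image_prod]
      have hactu : act k (FreeGroup.mk (l ++ a :: u')) = bactL (l ++ a :: u').reverse :=
        funext fun x => act_mk _ x
      congr 1
      · rw [hactu, CylW_eq_image hu]
        congr 1
        ext x
        simp [hulast]
      · have hactz : act k (FreeGroup.mk (FreeGroup.invRev (a :: u') ++ b :: w'))
            = bactL (FreeGroup.invRev (a :: u') ++ b :: w').reverse :=
          funext fun x => act_mk _ x
        have hactw : act k (FreeGroup.mk (l ++ b :: w')) = bactL (l ++ b :: w').reverse :=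
          funext fun x => act_mk _ x
        have h1 : CylW (FreeGroup.invRev (a :: u') ++ b :: w')
            = act k (FreeGroup.mk (FreeGroup.invRev (a :: u') ++ b :: w'))
                '' {x : Boundary k |
                  ∀ c ∈ (FreeGroup.invRev (a :: u') ++ b :: w').getLast?, x.1 0 ≠ linv k c} := by
          rw [CylW_eq_image hrz, ← hactz]
        rw [h1, ← Set.image_comp]
        have hcomp : act k (FreeGroup.mk (l ++ a :: u'))
              ∘ act k (FreeGroup.mk (FreeGroup.invRev (a :: u') ++ b :: w'))
            = act k (FreeGroup.mk (l ++ b :: w')) := by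
          funext x
          rw [Function.comp_apply, ← act_mul, ← hinv, mul_inv_cancel_left]
        rw [hcomp]
        have hgz : (FreeGroup.invRev (a :: u') ++ b :: w').getLast? = (b :: w').getLast? := by
          rw [List.getLast?_append, List.getLast?_eq_getLast (l := b :: w') (List.cons_ne_nil _ _)]
          rfl
        have hgw : (l ++ b :: w').getLast? = (b :: w').getLast? := by
          rw [List.getLast?_append, List.getLast?_eq_getLast (l := b :: w') (List.cons_ne_nil _ _)]
          rfl
        rw [CylW_eq_image hw, hgz, ← hgw, ← hactw]
    -- `η` of the rectangle equals `μ` of the difference cylinder.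
    have hrect : η (CylW (l ++ a :: u') ×ˢ CylW (l ++ b :: w'))
        = μ (CylW (FreeGroup.invRev (a :: u') ++ b :: w')) := by
      rw [← hcyl2, hcorr _ _ hXY, hinv, Cyl_eq_CylW, toWord_mk_self hrz]
    -- Lower bound for the difference cylinder.
    have hcond1 : ∀ c ∈ (FreeGroup.invRev (a :: u')).getLast?,
        CylW (b :: w') ⊆ {x : Boundary k | x.1 0 ≠ linv k c} := by
      intro c hc x hx
      rw [hrlast, Option.mem_def, Option.some.injEq] at hc
      subst hc
      have hx0 : x.1 0 = b := mem_CylW_head hx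
      rw [linv_linv]
      simpa [hx0] using hab.symm
    have hb1z := (bact_master μ C1 C2 hb (FreeGroup.invRev (a :: u')) hrred (CylW (b :: w'))
      (measurableSet_CylW _) hcond1).1
    have hzimg : CylW (FreeGroup.invRev (a :: u') ++ b :: w')
        = bactL (FreeGroup.invRev (a :: u')).reverse '' CylW (b :: w') :=
      CylW_append hrz (List.cons_ne_nil _ _)
    rw [← hzimg] at hb1z
    have hb2 := hM1' (a :: u') hau
    have hb3 : (((l ++ a :: u').map C2).prod : ℝ≥0) ≤ M * ((a :: u').map C2).prod := by
      rw [List.map_append, List.prod_append]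
      exact mul_le_mul_left (hprodC2_le l hl) _
    have hΩu : MeasurableSet
        {x : Boundary k | x.1 0 ≠ linv k ((a :: u').getLast (List.cons_ne_nil a u'))} :=
      measurableSet_ne0 _
    have hb4 : μ (CylW (l ++ a :: u')) ≤ (((l ++ a :: u').map C2).prod : ℝ≥0∞) * μ Set.univ := by
      have hcond : ∀ c ∈ (l ++ a :: u').getLast?,
          {x : Boundary k | x.1 0 ≠ linv k ((a :: u').getLast (List.cons_ne_nil a u'))}
            ⊆ {x : Boundary k | x.1 0 ≠ linv k c} := by
        intro c hc
        rw [hulast, Option.mem_def, Option.some.injEq] at hc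
        subst hc
        exact fun x hx => hx
      have hub := (bact_master μ C1 C2 hb (l ++ a :: u') hu _ hΩu hcond).2
      have himg : CylW (l ++ a :: u') = bactL (l ++ a :: u').reverse ''
          {x : Boundary k | x.1 0 ≠ linv k ((a :: u').getLast (List.cons_ne_nil a u'))} := by
        rw [CylW_eq_image hu]
        congr 1
        ext x
        simp [hulast]
      rw [himg]
      exact hub.trans (mul_le_mul_right (measure_mono (Set.subset_univ _)) _)
    have hb5 : μ (CylW (l ++ b :: w')) ≤ (M : ℝ≥0∞) * μ (CylW (b :: w')) := by
      have himg : CylW (l ++ b :: w') = bactL l.reverse '' CylW (b :: w') :=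
        CylW_append hw (List.cons_ne_nil _ _)
      have hcond : ∀ c ∈ l.getLast?, CylW (b :: w') ⊆ {x : Boundary k | x.1 0 ≠ linv k c} := by
        intro c hc x hx
        have hx0 : x.1 0 = b := mem_CylW_head hx
        have hbl' : b ≠ linv k c := (List.isChain_append.mp hw).2.2 c hc b rfl
        simpa [hx0] using hbl'
      have hub := (bact_master μ C1 C2 hb l hl (CylW (b :: w')) (measurableSet_CylW _) hcond).2
      rw [himg]
      refine hub.trans (mul_le_mul_left ?_ _)
      exact_mod_cast hprodC2_le l hl
    calc μ (CylW (l ++ a :: u')) * μ (CylW (l ++ b :: w'))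
        ≤ ((((l ++ a :: u').map C2).prod : ℝ≥0∞) * μ Set.univ)
            * ((M : ℝ≥0∞) * μ (CylW (b :: w'))) := mul_le_mul' hb4 hb5
      _ = ((M : ℝ≥0∞) * μ Set.univ)
            * ((((l ++ a :: u').map C2).prod : ℝ≥0∞) * μ (CylW (b :: w'))) := by ring
      _ ≤ ((M : ℝ≥0∞) * μ Set.univ)
            * (((M : ℝ≥0∞) * (((a :: u').map C2).prod : ℝ≥0∞)) * μ (CylW (b :: w'))) := by
          refine mul_le_mul_right (mul_le_mul_left ?_ _) _
          exact_mod_cast hb3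
      _ = ((M : ℝ≥0∞) ^ 2 * μ Set.univ)
            * ((((a :: u').map C2).prod : ℝ≥0∞) * μ (CylW (b :: w'))) := by ring
      _ ≤ ((M : ℝ≥0∞) ^ 2 * μ Set.univ)
            * (((M : ℝ≥0∞) * (((FreeGroup.invRev (a :: u')).map C1).prod : ℝ≥0∞))
                * μ (CylW (b :: w'))) := by
          refine mul_le_mul_right (mul_le_mul_left ?_ _) _
          exact_mod_cast hb2
      _ = A * ((((FreeGroup.invRev (a :: u')).map C1).prod : ℝ≥0∞) * μ (CylW (b :: w'))) := by
          rw [hA]; ring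
      _ ≤ A * μ (CylW (FreeGroup.invRev (a :: u') ++ b :: w')) := mul_le_mul_right hb1z _
      _ = A * η (CylW (l ++ a :: u') ×ˢ CylW (l ++ b :: w')) := by rw [hrect]
  -- Domination on a rectangle of cylinders branching after `l`.
  have dom : ∀ (l : List (L k)) (a b : L k), a ≠ b →
      RedW (l ++ [a]) → RedW (l ++ [b]) →
      ∀ X Y : Set (Boundary k), MeasurableSet X → MeasurableSet Y →
        X ⊆ CylW (l ++ [a]) → Y ⊆ CylW (l ++ [b]) →
        c * (μ X * μ Y) ≤ η (X ×ˢ Y) := by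
    intro l a b hab hra hrb X Y hX hY hXsub hYsub
    have hrectD2 : CylW (l ++ [a]) ×ˢ CylW (l ++ [b]) ⊆ D2 k := by
      rintro ⟨p, q⟩ ⟨hp, hq⟩
      have h1 : p.1 l.length = a := by
        have := hp l.length (by simp)
        rwa [List.getElem_concat_length rfl] at this
      have h2 : q.1 l.length = b := by
        have := hq l.length (by simp)
        rwa [List.getElem_concat_length rfl] at this
      show p ≠ q
      intro heq
      apply hab
      rw [← h1, ← h2, heq]
    have hrectC : IsCompact (CylW (l ++ [a]) ×ˢ CylW (l ++ [b])) :=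
      ((isClosed_CylW _).isCompact).prod ((isClosed_CylW _).isCompact)
    have hfin : η (CylW (l ++ [a]) ×ˢ CylW (l ++ [b])) < ⊤ := hη.2.2 _ hrectD2 hrectC
    set RA := CylW (l ++ [a]) with hRA
    set RB := CylW (l ++ [b]) with hRB
    set ν := η.restrict (RA ×ˢ RB) with hν
    set κ := (μ.restrict RA).prod (μ.restrict RB) with hκ
    haveI hfm : IsFiniteMeasure ν := ⟨by rwa [Measure.restrict_apply_univ]⟩
    haveI hor : ν.OuterRegular := inferInstance
    -- Per-cell bound.
    have cellb : ∀ (n : ℕ) (f g : Fin (l.length + 1 + n) → L k),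
        CylW (List.ofFn f) ×ˢ CylW (List.ofFn g) ⊆ RA ×ˢ RB →
        c * κ (CylW (List.ofFn f) ×ˢ CylW (List.ofFn g))
          ≤ ν (CylW (List.ofFn f) ×ˢ CylW (List.ofFn g)) := by
      intro n f g hsub
      have hmF : MeasurableSet (CylW (List.ofFn f)) := measurableSet_CylW _
      have hmG : MeasurableSet (CylW (List.ofFn g)) := measurableSet_CylW _
      have hκval : κ (CylW (List.ofFn f) ×ˢ CylW (List.ofFn g))
          = μ (CylW (List.ofFn f) ∩ RA) * μ (CylW (List.ofFn g) ∩ RB) := by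
        rw [hκ, Measure.prod_prod, Measure.restrict_apply hmF, Measure.restrict_apply hmG]
      rcases Set.eq_empty_or_nonempty (CylW (List.ofFn f)) with hF | ⟨x, hxF⟩
      · rw [hκval, hF]; simp
      rcases Set.eq_empty_or_nonempty (CylW (List.ofFn g)) with hG | ⟨y, hyG⟩
      · rw [hκval, hG]; simp
      have hFsub : CylW (List.ofFn f) ⊆ RA := fun p hp => (hsub (Set.mk_mem_prod hp hyG)).1
      have hGsub : CylW (List.ofFn g) ⊆ RB := fun q hq => (hsub (Set.mk_mem_prod hxF hq)).2
      have htakeF : (List.ofFn f).take (l.length + 1) = l ++ [a] := by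
        apply List.ext_getElem
        · simp
        · intro i h1 h2
          have hi : i < l.length + 1 := by simpa using h2
          have hi' : i < l.length + 1 + n := by omega
          rw [List.getElem_take]
          have e1 : x.1 i = (List.ofFn f)[i]'(by simpa using hi') := hxF i (by simpa using hi')
          have e2 : x.1 i = (l ++ [a])[i]'(by simpa using hi) := hFsub hxF i (by simpa using hi)
          rw [← e1, e2]
      have htakeG : (List.ofFn g).take (l.length + 1) = l ++ [b] := by
        apply List.ext_getElem
        · simp
        · intro i h1 h2
          have hi : i < l.length + 1 := by simpa using h2
          have hi' : i < l.length + 1 + n := by omega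
          rw [List.getElem_take]
          have e1 : y.1 i = (List.ofFn g)[i]'(by simpa using hi') := hyG i (by simpa using hi')
          have e2 : y.1 i = (l ++ [b])[i]'(by simpa using hi) := hGsub hyG i (by simpa using hi)
          rw [← e1, e2]
      obtain ⟨u', hu'⟩ : ∃ u', List.ofFn f = (l ++ [a]) ++ u' :=
        ⟨(List.ofFn f).drop (l.length + 1), by rw [← htakeF, List.take_append_drop]⟩
      obtain ⟨w', hw'⟩ : ∃ w', List.ofFn g = (l ++ [b]) ++ w' :=
        ⟨(List.ofFn g).drop (l.length + 1), by rw [← htakeG, List.take_append_drop]⟩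
      have hFeq : List.ofFn f = l ++ a :: u' := by rw [hu', List.append_assoc]; rfl
      have hGeq : List.ofFn g = l ++ b :: w' := by rw [hw', List.append_assoc]; rfl
      have hredF : RedW (l ++ a :: u') := hFeq ▸ redW_of_mem_CylW hxF
      have hredG : RedW (l ++ b :: w') := hGeq ▸ redW_of_mem_CylW hyG
      have hcore := core l u' w' a b hab hredF hredG
      rw [← hFeq, ← hGeq] at hcore
      have hνval : ν (CylW (List.ofFn f) ×ˢ CylW (List.ofFn g))
          = η (CylW (List.ofFn f) ×ˢ CylW (List.ofFn g)) := by
        rw [hν, Measure.restrict_apply (hmF.prod hmG), Set.inter_eq_self_of_subset_left hsub]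
      rw [hνval, hκval, Set.inter_eq_self_of_subset_left hFsub,
        Set.inter_eq_self_of_subset_left hGsub]
      calc c * (μ (CylW (List.ofFn f)) * μ (CylW (List.ofFn g)))
          ≤ c * (A * η (CylW (List.ofFn f) ×ˢ CylW (List.ofFn g))) := mul_le_mul_right hcore _
        _ = (c * A) * η (CylW (List.ofFn f) ×ˢ CylW (List.ofFn g)) := by ring
        _ ≤ 1 * η (CylW (List.ofFn f) ×ˢ CylW (List.ofFn g)) := mul_le_mul_left hcA _
        _ = η (CylW (List.ofFn f) ×ˢ CylW (List.ofFn g)) := one_mul _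
    -- Open sets.
    have openb : ∀ V : Set (Boundary k × Boundary k), IsOpen V → V ⊆ RA ×ˢ RB →
        c * κ V ≤ ν V := by
      intro V hV hVsub
      set W : ℕ → Set (Boundary k × Boundary k) := fun n =>
        ⋃ (t : (Fin (l.length + 1 + n) → L k) × (Fin (l.length + 1 + n) → L k))
          (_ : CylW (List.ofFn t.1) ×ˢ CylW (List.ofFn t.2) ⊆ V),
          CylW (List.ofFn t.1) ×ˢ CylW (List.ofFn t.2) with hW
      have hWsubV : ∀ n, W n ⊆ V := fun n => Set.iUnion₂_subset fun t ht => ht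
      have hWmono : Monotone W := by
        apply monotone_nat_of_le_succ
        intro n p hp
        simp only [hW, Set.mem_iUnion] at hp ⊢
        obtain ⟨t, ht, hpt⟩ := hp
        refine ⟨(fun i : Fin (l.length + 1 + (n + 1)) => p.1.1 i,
          fun i : Fin (l.length + 1 + (n + 1)) => p.2.1 i), ?_, ?_⟩
        · exact (Set.prod_mono (cylW_ofFn_succ_subset hpt.1)
            (cylW_ofFn_succ_subset hpt.2)).trans ht
        · exact ⟨mem_CylW_ofFn _ _, mem_CylW_ofFn _ _⟩
      have hWcover : ⋃ n, W n = V := by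
        apply subset_antisymm (Set.iUnion_subset hWsubV)
        intro p hp
        obtain ⟨U1, U2, hU1, hU2, hpU1, hpU2, hUsub⟩ := isOpen_prod_iff.mp hV p.1 p.2 hp
        obtain ⟨n1, hn1⟩ := exists_cylW_subset hU1 hpU1
        obtain ⟨n2, hn2⟩ := exists_cylW_subset hU2 hpU2
        refine Set.mem_iUnion.mpr ⟨max n1 n2, ?_⟩
        simp only [hW, Set.mem_iUnion]
        refine ⟨(fun i : Fin (l.length + 1 + max n1 n2) => p.1.1 i,
          fun i : Fin (l.length + 1 + max n1 n2) => p.2.1 i), ?_, ?_⟩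
        · intro q hq
          apply hUsub
          constructor
          · exact hn1 _ (by omega) hq.1
          · exact hn2 _ (by omega) hq.2
        · exact ⟨mem_CylW_ofFn _ _, mem_CylW_ofFn _ _⟩
      have hWbound : ∀ n, c * κ (W n) ≤ ν (W n) := by
        intro n
        have hWn : W n = ⋃ t : {t : (Fin (l.length + 1 + n) → L k) × (Fin (l.length + 1 + n) → L k) //
            CylW (List.ofFn t.1) ×ˢ CylW (List.ofFn t.2) ⊆ V},
            CylW (List.ofFn t.1.1) ×ˢ CylW (List.ofFn t.1.2) := by
          simp only [hW]
          exact (Set.iUnion_subtype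
            (fun t : (Fin (l.length + 1 + n) → L k) × (Fin (l.length + 1 + n) → L k) =>
              CylW (List.ofFn t.1) ×ˢ CylW (List.ofFn t.2) ⊆ V)
            (fun t => CylW (List.ofFn t.1.1) ×ˢ CylW (List.ofFn t.1.2))).symm
        have hdisj : Pairwise (Function.onFun Disjoint fun t :
            {t : (Fin (l.length + 1 + n) → L k) × (Fin (l.length + 1 + n) → L k) //
              CylW (List.ofFn t.1) ×ˢ CylW (List.ofFn t.2) ⊆ V} =>
            CylW (List.ofFn t.1.1) ×ˢ CylW (List.ofFn t.1.2)) := by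
          intro t1 t2 hne
          have hne' : t1.1 ≠ t2.1 := fun h => hne (Subtype.ext h)
          rw [Function.onFun, Set.disjoint_left]
          rintro ⟨p1, p2⟩ hmem1 hmem2
          by_cases hf : t1.1.1 = t2.1.1
          · have hg : t1.1.2 ≠ t2.1.2 := fun h => hne' (Prod.ext hf h)
            exact Set.disjoint_left.mp (cylW_ofFn_disjoint hg) hmem1.2 hmem2.2
          · exact Set.disjoint_left.mp (cylW_ofFn_disjoint hf) hmem1.1 hmem2.1
        have hmeas : ∀ t : {t : (Fin (l.length + 1 + n) → L k) × (Fin (l.length + 1 + n) → L k) //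
            CylW (List.ofFn t.1) ×ˢ CylW (List.ofFn t.2) ⊆ V},
            MeasurableSet (CylW (List.ofFn t.1.1) ×ˢ CylW (List.ofFn t.1.2)) :=
          fun t => (measurableSet_CylW _).prod (measurableSet_CylW _)
        rw [hWn, measure_iUnion hdisj hmeas, measure_iUnion hdisj hmeas,
          ← ENNReal.tsum_mul_left]
        exact ENNReal.tsum_le_tsum fun t => cellb n t.1.1 t.1.2 (t.2.trans hVsub)
      have hκV : κ V = ⨆ n, κ (W n) := by
        rw [← hWcover]
        exact hWmono.directed_le.measure_iUnion
      calc c * κ V = ⨆ n, c * κ (W n) := by rw [hκV, ENNReal.mul_iSup]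
        _ ≤ ν V := iSup_le fun n => (hWbound n).trans (measure_mono (hWsubV n))
    -- Conclusion for `X ×ˢ Y`.
    have hXYsub : X ×ˢ Y ⊆ RA ×ˢ RB := Set.prod_mono hXsub hYsub
    have hfinal : c * κ (X ×ˢ Y) ≤ ν (X ×ˢ Y) := by
      rw [Set.measure_eq_iInf_isOpen (X ×ˢ Y) ν]
      refine le_iInf fun U => le_iInf fun hU => le_iInf fun hUopen => ?_
      have hUrect_open : IsOpen (U ∩ RA ×ˢ RB) :=
        hUopen.inter ((isOpen_CylW _).prod (isOpen_CylW _))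
      calc c * κ (X ×ˢ Y) ≤ c * κ (U ∩ RA ×ˢ RB) :=
            mul_le_mul_right (measure_mono (Set.subset_inter hU hXYsub)) _
        _ ≤ ν (U ∩ RA ×ˢ RB) := openb _ hUrect_open Set.inter_subset_right
        _ ≤ ν U := measure_mono Set.inter_subset_left
    have hκXY : κ (X ×ˢ Y) = μ X * μ Y := by
      rw [hκ, Measure.prod_prod, Measure.restrict_apply hX, Measure.restrict_apply hY,
        Set.inter_eq_self_of_subset_left hXsub, Set.inter_eq_self_of_subset_left hYsub]
    have hνXY : ν (X ×ˢ Y) = η (X ×ˢ Y) := by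
      rw [hν, Measure.restrict_apply (hX.prod hY), Set.inter_eq_self_of_subset_left hXYsub]
    rw [← hκXY, ← hνXY]
    exact hfinal
  -- Part 2, assembled.
  have main2 : ∀ E S : Set (Boundary k), MeasurableSet E → MeasurableSet S → Disjoint E S →
      c * (μ E * μ S) ≤ η ((E ×ˢ S) ∩ D2 k) := by
    intro E S hE hS hdisj
    have hpts : ∀ p ∈ E, ∀ q ∈ S, p ≠ q := fun p hp q hq heq =>
      (Set.disjoint_left.mp hdisj hp) (heq ▸ hq)
    have hESD2 : (E ×ˢ S) ∩ D2 k = E ×ˢ S := by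
      apply Set.inter_eq_self_of_subset_left
      rintro ⟨p, q⟩ ⟨hp, hq⟩
      exact hpts p hp q hq
    set piece : List (L k) × L k × L k → Set (Boundary k × Boundary k) := fun t =>
      if t.2.1 ≠ t.2.2 then
        (E ∩ CylW (t.1 ++ [t.2.1])) ×ˢ (S ∩ CylW (t.1 ++ [t.2.2])) else ∅ with hpiece
    have hpm : ∀ t, MeasurableSet (piece t) := by
      intro t
      simp only [hpiece]
      split
      · exact (hE.inter (measurableSet_CylW _)).prod (hS.inter (measurableSet_CylW _))
      · exact MeasurableSet.empty
    have haux : ∀ (l : List (L k)) (a b : L k) (l' : List (L k)) (a' b' : L k)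
        (p q : Boundary k), a ≠ b →
        p ∈ CylW (l ++ [a]) → q ∈ CylW (l ++ [b]) →
        p ∈ CylW (l' ++ [a']) → q ∈ CylW (l' ++ [b']) →
        l.length ≤ l'.length → (l, a, b) = (l', a', b') := by
      intro l a b l' a' b' p q hab hp hq hp' hq' hlen
      rcases eq_or_lt_of_le hlen with heq | hlt
      · have hl : l = l' := by
          apply List.ext_getElem heq
          intro i h1 h2
          have e1 : p.1 i = l[i]'h1 := by
            have := hp i (by simp; omega)
            rwa [List.getElem_append_left h1] at this
          have e2 : p.1 i = l'[i]'h2 := by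
            have := hp' i (by simp; omega)
            rwa [List.getElem_append_left h2] at this
          rw [← e1, e2]
        subst hl
        have ha : a = a' := by
          have e1 : p.1 l.length = a := by
            have := hp l.length (by simp)
            rwa [List.getElem_concat_length rfl] at this
          have e2 : p.1 l.length = a' := by
            have := hp' l.length (by simp)
            rwa [List.getElem_concat_length rfl] at this
          rw [← e1, e2]
        have hbb : b = b' := by
          have e1 : q.1 l.length = b := by
            have := hq l.length (by simp)
            rwa [List.getElem_concat_length rfl] at this
          have e2 : q.1 l.length = b' := by
            have := hq' l.length (by simp)
            rwa [List.getElem_concat_length rfl] at this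
          rw [← e1, e2]
        rw [ha, hbb]
      · exfalso
        have h1 : p.1 l.length = a := by
          have := hp l.length (by simp)
          rwa [List.getElem_concat_length rfl] at this
        have h2 : q.1 l.length = b := by
          have := hq l.length (by simp)
          rwa [List.getElem_concat_length rfl] at this
        have h3 : p.1 l.length = l'[l.length]'hlt := by
          have := hp' l.length (by simp; omega)
          rwa [List.getElem_append_left hlt] at this
        have h4 : q.1 l.length = l'[l.length]'hlt := by
          have := hq' l.length (by simp; omega)
          rwa [List.getElem_append_left hlt] at this
        exact hab (by rw [← h1, h3, ← h4, h2])
    have hpd : Pairwise (Function.onFun Disjoint piece) := by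
      rintro ⟨l1, a1, b1⟩ ⟨l2, a2, b2⟩ hne
      rw [Function.onFun, Set.disjoint_left]
      intro p hp1 hp2
      simp only [hpiece] at hp1 hp2
      by_cases h1 : a1 ≠ b1
      swap
      · rw [if_neg h1] at hp1; exact hp1
      by_cases h2 : a2 ≠ b2
      swap
      · rw [if_neg h2] at hp2; exact hp2
      rw [if_pos h1] at hp1
      rw [if_pos h2] at hp2
      apply hne
      obtain ⟨⟨hpE, hpc1⟩, hqS, hqc1⟩ := hp1
      obtain ⟨⟨_, hpc2⟩, _, hqc2⟩ := hp2
      rcases le_total l1.length l2.length with hle | hle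
      · exact haux l1 a1 b1 l2 a2 b2 p.1 p.2 h1 hpc1 hqc1 hpc2 hqc2 hle
      · exact (haux l2 a2 b2 l1 a1 b1 p.1 p.2 h2 hpc2 hqc2 hpc1 hqc1 hle).symm
    have hunion : ⋃ t, piece t = E ×ˢ S := by
      apply subset_antisymm
      · refine Set.iUnion_subset fun t => ?_
        simp only [hpiece]
        split
        · exact Set.prod_mono Set.inter_subset_left Set.inter_subset_left
        · exact Set.empty_subset _
      · rintro ⟨p, q⟩ ⟨hp, hq⟩
        have hpq : p ≠ q := hpts p hp q hq
        have hex : ∃ n, p.1 n ≠ q.1 n := by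
          by_contra hcon
          push_neg at hcon
          exact hpq (Subtype.ext (funext hcon))
        have hspec : p.1 (Nat.find hex) ≠ q.1 (Nat.find hex) := Nat.find_spec hex
        have hmin : ∀ m < Nat.find hex, p.1 m = q.1 m := fun m hm => by
          have := Nat.find_min hex hm
          simpa using this
        refine Set.mem_iUnion.mpr
          ⟨(List.ofFn fun i : Fin (Nat.find hex) => p.1 i, p.1 (Nat.find hex),
            q.1 (Nat.find hex)), ?_⟩
        simp only [hpiece]
        rw [if_pos hspec]
        have hpofn : (List.ofFn fun i : Fin (Nat.find hex + 1) => p.1 i)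
            = (List.ofFn fun i : Fin (Nat.find hex) => p.1 i) ++ [p.1 (Nat.find hex)] := by
          rw [List.ofFn_succ']
          simp [List.concat_eq_append]
        have hqofn : (List.ofFn fun i : Fin (Nat.find hex + 1) => q.1 i)
            = (List.ofFn fun i : Fin (Nat.find hex) => q.1 i) ++ [q.1 (Nat.find hex)] := by
          rw [List.ofFn_succ']
          simp [List.concat_eq_append]
        have hqpre : (List.ofFn fun i : Fin (Nat.find hex) => p.1 i)
            = List.ofFn fun i : Fin (Nat.find hex) => q.1 i := by
          apply List.ext_getElem (by simp)
          intro i hi1 hi2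
          simp only [List.getElem_ofFn]
          exact hmin i (by simpa using hi1)
        constructor
        · refine ⟨hp, ?_⟩
          rw [← hpofn]
          exact mem_CylW_ofFn p (Nat.find hex + 1)
        · refine ⟨hq, ?_⟩
          rw [hqpre, ← hqofn]
          exact mem_CylW_ofFn q (Nat.find hex + 1)
    have hηsum : η (E ×ˢ S) = ∑' t, η (piece t) := by
      rw [← hunion]; exact measure_iUnion hpd hpm
    have hμsum : (μ.prod μ) (E ×ˢ S) = ∑' t, (μ.prod μ) (piece t) := by
      rw [← hunion]; exact measure_iUnion hpd hpm
    have hterm : ∀ t, c * ((μ.prod μ) (piece t)) ≤ η (piece t) := by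
      rintro ⟨l, a, b⟩
      simp only [hpiece]
      split
      · rename_i hab
        rcases Set.eq_empty_or_nonempty (E ∩ CylW (l ++ [a])) with hF | ⟨x, hxF⟩
        · rw [hF]; simp
        rcases Set.eq_empty_or_nonempty (S ∩ CylW (l ++ [b])) with hG | ⟨y, hyG⟩
        · rw [hG]; simp
        have hra : RedW (l ++ [a]) := redW_of_mem_CylW hxF.2
        have hrb : RedW (l ++ [b]) := redW_of_mem_CylW hyG.2
        have hd := dom l a b hab hra hrb (E ∩ CylW (l ++ [a])) (S ∩ CylW (l ++ [b]))
          (hE.inter (measurableSet_CylW _)) (hS.inter (measurableSet_CylW _))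
          Set.inter_subset_right Set.inter_subset_right
        rw [Measure.prod_prod]
        exact hd
      · simp
    calc c * (μ E * μ S) = c * (μ.prod μ) (E ×ˢ S) := by rw [Measure.prod_prod]
      _ = c * ∑' t, (μ.prod μ) (piece t) := by rw [hμsum]
      _ = ∑' t, c * (μ.prod μ) (piece t) := (ENNReal.tsum_mul_left).symm
      _ ≤ ∑' t, η (piece t) := ENNReal.tsum_le_tsum hterm
      _ = η (E ×ˢ S) := hηsum.symm
      _ = η ((E ×ˢ S) ∩ D2 k) := by rw [hESD2]
  refine ⟨c, hcpos, fun f => ?_⟩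
  obtain ⟨b, hbpos, hbE⟩ := hbl f.toWord
  refine ⟨b, hbpos, fun E S hE hS hdisj => ⟨?_, main2 E S hE hS hdisj⟩⟩
  have hact : act k f '' E = bactL f.toWord.reverse '' E := by
    have : act k f = bactL f.toWord.reverse := funext fun x => act_eq_bact f x
    rw [this]
  rw [hact]
  exact hbE E hE

end

end FGC
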